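/- For every n ≥ 3: ‖s_n − f_n‖₂ ≤ 2·χ^{−1}·C⁵·‖p_{n−3}‖₂. -/

import Mathlib

open Filter RealInnerProductSpace

variable {H : Type*} [NormedAddCommGroup H] [InnerProductSpace ℝ H]

/-- `Wlt P n` is the span of `P 0, …, P (n-1)`; thus `Wlt P 0 = ⊥ = W_{-1}` and
`Wlt P (n+1)` is the space `W_n = span{P_0, …, P_n}`. -/
def Wlt (P : ℕ → H) (n : ℕ) : Submodule ℝ H := Submodule.span ℝ (P '' Set.Iio n)

/-- `Wtot P` is the space `W = ⋃ₙ Wₙ` of all polynomials. -/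
def Wtot (P : ℕ → H) : Submodule ℝ H := Submodule.span ℝ (Set.range P)

/-- The Sobolev inner product `⟨f, g⟩_S = ⟨f, g⟩₂ + χ⟨Δf, Δg⟩₂`. -/
noncomputable def innerS (Δ : H →ₗ[ℝ] H) (χ : ℝ) (f g : H) : ℝ :=
  ⟪ f, g ⟫ + χ * ⟪ Δ f, Δ g ⟫

/-- The Sobolev norm `‖f‖_S = √(‖f‖₂² + χ‖Δf‖₂²)`. -/
noncomputable def normS (Δ : H →ₗ[ℝ] H) (χ : ℝ) (f : H) : ℝ :=
  Real.sqrt (‖f‖ ^ 2 + χ * ‖Δ f‖ ^ 2)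

lemma Wlt_mono (P : ℕ → H) {a b : ℕ} (hab : a ≤ b) : Wlt P a ≤ Wlt P b :=
  Submodule.span_mono (Set.image_mono fun _ hx => lt_of_lt_of_le hx hab)

lemma P_mem_Wlt (P : ℕ → H) {j n : ℕ} (h : j < n) : P j ∈ Wlt P n :=
  Submodule.subset_span ⟨j, h, rfl⟩

lemma Wlt_le_Wtot (P : ℕ → H) (n : ℕ) : Wlt P n ≤ Wtot P :=
  Submodule.span_mono (Set.image_subset_range P _)

lemma exists_Wlt (P : ℕ → H) {u : H} (hu : u ∈ Wtot P) : ∃ n, u ∈ Wlt P n := by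
  have hr : Set.range P = ⋃ n, P '' Set.Iio n := by
    ext x; constructor
    · rintro ⟨j, rfl⟩; exact Set.mem_iUnion.2 ⟨j + 1, ⟨j, Nat.lt_succ_self j, rfl⟩⟩
    · intro hx; obtain ⟨n, j, _, rfl⟩ := Set.mem_iUnion.1 hx; exact ⟨j, rfl⟩
  rw [Wtot, hr, Submodule.span_iUnion] at hu
  have hd : Directed (· ≤ ·) (fun n => Wlt P n) := fun a b => ⟨a ⊔ b, Wlt_mono P le_sup_left, Wlt_mono P le_sup_right⟩
  exact (Submodule.mem_iSup_of_directed _ hd).1 hu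

lemma Delta_maps (P : ℕ → H) (Δ : H →ₗ[ℝ] H) (hΔ0 : Δ (P 0) = 0)
    (hΔsucc : ∀ n, Δ (P (n + 1)) = P n) {n : ℕ} {u : H} (hu : u ∈ Wlt P (n + 1)) :
    Δ u ∈ Wlt P n := by
  induction hu using Submodule.span_induction with
  | mem x hx =>
    obtain ⟨j, hj, rfl⟩ := hx
    simp only [Set.mem_Iio] at hj
    match j, hj with
    | 0, _ => rw [hΔ0]; exact zero_mem _
    | j + 1, hj => rw [hΔsucc]; exact P_mem_Wlt P (by omega)
  | zero => simpa using zero_mem (Wlt P n)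
  | add x y hx hy ihx ihy => rw [map_add]; exact add_mem ihx ihy
  | smul a x hx ihx => rw [map_smul]; exact Submodule.smul_mem _ _ ihx

lemma Wlt_succ_decomp (P : ℕ → H) (n : ℕ) {u : H} (hu : u ∈ Wlt P (n + 1)) :
    ∃ w ∈ Wlt P n, ∃ a : ℝ, u = w + a • P n := by
  have himg : P '' Set.Iio (n + 1) = P '' Set.Iio n ∪ {P n} := by
    have : Set.Iio (n + 1) = Set.Iio n ∪ {n} := by
      ext x
      simp only [Set.mem_union, Set.mem_Iio, Set.mem_singleton_iff]
      omega
    rw [this, Set.image_union, Set.image_singleton]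
  rw [Wlt, himg, Submodule.span_union] at hu
  obtain ⟨w, hw, z, hz, rfl⟩ := Submodule.mem_sup.1 hu
  obtain ⟨a, rfl⟩ := Submodule.mem_span_singleton.1 hz
  exact ⟨w, hw, a, rfl⟩

lemma degree_drop (P : ℕ → H) (hP : LinearIndependent ℝ P) (Δ : H →ₗ[ℝ] H)
    (hΔ0 : Δ (P 0) = 0) (hΔsucc : ∀ n, Δ (P (n + 1)) = P n) {n : ℕ} {u : H}
    (hu : u ∈ Wlt P (n + 2)) (hΔu : Δ u ∈ Wlt P n) : u ∈ Wlt P (n + 1) := by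
  obtain ⟨w, hw, a, rfl⟩ := Wlt_succ_decomp P (n + 1) hu
  have hΔw : Δ w ∈ Wlt P n := Delta_maps P Δ hΔ0 hΔsucc hw
  have haP : a • P n ∈ Wlt P n := by
    have h1 : Δ (w + a • P (n + 1)) = Δ w + a • P n := by
      rw [map_add, map_smul, hΔsucc]
    have : a • P n = Δ (w + a • P (n + 1)) - Δ w := by rw [h1]; abel
    rw [this]; exact sub_mem hΔu hΔw
  rcases eq_or_ne a 0 with h | h
  · subst h; simpa using hw
  · have hPn : P n ∈ Wlt P n := by
      have h2 := Submodule.smul_mem _ a⁻¹ haP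
      rwa [smul_smul, inv_mul_cancel₀ h, one_smul] at h2
    exact absurd hPn (by rw [Wlt]; exact hP.notMem_span_image (by simp))

lemma ker_delta (P : ℕ → H) (hP : LinearIndependent ℝ P) (Δ : H →ₗ[ℝ] H)
    (hΔ0 : Δ (P 0) = 0) (hΔsucc : ∀ n, Δ (P (n + 1)) = P n) {u : H}
    (hu : u ∈ Wtot P) (h : Δ u = 0) : ∃ c : ℝ, u = c • P 0 := by
  obtain ⟨n, hn⟩ := exists_Wlt P hu
  clear hu
  induction n with
  | zero =>
    have hIio : Set.Iio (0:ℕ) = ∅ := by ext x; simp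
    have : u ∈ (⊥ : Submodule ℝ H) := by
      simpa [Wlt, hIio, Submodule.span_empty] using hn
    exact ⟨0, by simpa using this⟩
  | succ m ih =>
    match m with
    | 0 =>
      have : P '' Set.Iio 1 = {P 0} := by
        have : Set.Iio (1:ℕ) = {0} := by ext x; simp [Nat.lt_one_iff]
        rw [this, Set.image_singleton]
      rw [Wlt, this] at hn
      obtain ⟨c, hc⟩ := Submodule.mem_span_singleton.1 hn
      exact ⟨c, hc.symm⟩
    | j + 1 =>
      exact ih (degree_drop P hP Δ hΔ0 hΔsucc hn (by rw [h]; exact zero_mem _))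

lemma G_monic (P : ℕ → H) (hP : LinearIndependent ℝ P) (Δ G : H →ₗ[ℝ] H)
    (hΔ0 : Δ (P 0) = 0) (hΔsucc : ∀ n, Δ (P (n + 1)) = P n)
    (hGinv : ∀ u ∈ Wtot P, Δ (G u) = u)
    (hGmap : ∀ n, ∀ u ∈ Wlt P (n + 1), G u ∈ Wlt P (n + 2))
    {m : ℕ} {u : H} (hu : u ∈ Wlt P (m + 1)) (hmon : u - P m ∈ Wlt P m) :
    G u ∈ Wlt P (m + 2) ∧ G u - P (m + 1) ∈ Wlt P (m + 1) := by
  have h1 : G u ∈ Wlt P (m + 2) := hGmap m u hu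
  have h2 : G u - P (m + 1) ∈ Wlt P (m + 2) :=
    sub_mem h1 (P_mem_Wlt P (by omega))
  have h3 : Δ (G u - P (m + 1)) ∈ Wlt P m := by
    rw [map_sub, hGinv u (Wlt_le_Wtot P _ hu), hΔsucc]; exact hmon
  exact ⟨h1, degree_drop P hP Δ hΔ0 hΔsucc h2 h3⟩

lemma legendre_min (P : ℕ → H) (p : ℕ → H)
    (hportho : ∀ n, ∀ w ∈ Wlt P n, ⟪ p n, w ⟫ = 0)
    {m : ℕ} {u : H} (h : u - p m ∈ Wlt P m) : ‖p m‖ ≤ ‖u‖ := by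
  have horth : ⟪ p m, u - p m ⟫ = 0 := hportho m _ h
  have heq : u = p m + (u - p m) := by abel
  have hsq : ‖p m + (u - p m)‖ ^ 2 = ‖p m‖ ^ 2 + ‖u - p m‖ ^ 2 := by
    rw [norm_add_sq_real, horth]; ring
  rw [← heq] at hsq
  nlinarith [norm_nonneg u, norm_nonneg (p m), sq_nonneg (‖u - p m‖)]

lemma Wlt_le_span_s (P : ℕ → H) (s : ℕ → H)
    (hsmonic : ∀ n, s n - P n ∈ Wlt P n) :
    ∀ m, Wlt P m ≤ Submodule.span ℝ (s '' Set.Iio m) := by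
  intro m
  induction m with
  | zero =>
    rw [Wlt, show Set.Iio (0:ℕ) = ∅ from by ext x; simp]
    simp
  | succ m ih =>
    rw [Wlt, Submodule.span_le]
    rintro x ⟨j, hj, rfl⟩
    simp only [Set.mem_Iio] at hj
    have hsj : s j ∈ Submodule.span ℝ (s '' Set.Iio (m + 1)) :=
      Submodule.subset_span ⟨j, hj, rfl⟩
    have hj' : j ≤ m := by omega
    have hlow : s j - P j ∈ Submodule.span ℝ (s '' Set.Iio (m + 1)) :=
      Submodule.span_mono (Set.image_mono fun x hx => lt_of_lt_of_le hx m.le_succ)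
        (ih (Wlt_mono P hj' (hsmonic j)))
    have : P j = s j - (s j - P j) := by abel
    rw [this]
    exact sub_mem hsj hlow

lemma innerS_comm (Δ : H →ₗ[ℝ] H) (χ : ℝ) (f g : H) : innerS Δ χ f g = innerS Δ χ g f := by
  simp [innerS, real_inner_comm]

lemma innerS_self (Δ : H →ₗ[ℝ] H) (χ : ℝ) (f : H) :
    innerS Δ χ f f = ‖f‖ ^ 2 + χ * ‖Δ f‖ ^ 2 := by
  simp [innerS, real_inner_self_eq_norm_sq]

lemma innerS_add_right (Δ : H →ₗ[ℝ] H) (χ : ℝ) (f g h : H) :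
    innerS Δ χ f (g + h) = innerS Δ χ f g + innerS Δ χ f h := by
  simp [innerS, inner_add_right, map_add]; ring

lemma innerS_smul_right (Δ : H →ₗ[ℝ] H) (χ : ℝ) (a : ℝ) (f g : H) :
    innerS Δ χ f (a • g) = a * innerS Δ χ f g := by
  simp [innerS, inner_smul_right, map_smul]; ring

lemma innerS_sub_right (Δ : H →ₗ[ℝ] H) (χ : ℝ) (f g h : H) :
    innerS Δ χ f (g - h) = innerS Δ χ f g - innerS Δ χ f h := by
  simp [innerS, inner_sub_right, map_sub]; ring

lemma innerS_sub_left (Δ : H →ₗ[ℝ] H) (χ : ℝ) (f g h : H) :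
    innerS Δ χ (f - g) h = innerS Δ χ f h - innerS Δ χ g h := by
  simp [innerS, inner_sub_left, map_sub]; ring

lemma innerS_smul_left (Δ : H →ₗ[ℝ] H) (χ : ℝ) (a : ℝ) (f g : H) :
    innerS Δ χ (a • f) g = a * innerS Δ χ f g := by
  simp [innerS, real_inner_smul_left, map_smul]; ring

lemma G_mem_Wtot (P : ℕ → H) (G : H →ₗ[ℝ] H)
    (hGmap : ∀ n, ∀ u ∈ Wlt P (n + 1), G u ∈ Wlt P (n + 2))
    {u : H} (hu : u ∈ Wtot P) : G u ∈ Wtot P := by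
  obtain ⟨n, hn⟩ := exists_Wlt P hu
  exact Wlt_le_Wtot P _ (hGmap n u (Wlt_mono P n.le_succ hn))

lemma key_bound (P : ℕ → H) (hP : LinearIndependent ℝ P)
    (Δ G : H →ₗ[ℝ] H)
    (hΔ0 : Δ (P 0) = 0) (hΔsucc : ∀ n, Δ (P (n + 1)) = P n)
    (hGsym : ∀ u ∈ Wtot P, ∀ v ∈ Wtot P, ⟪ G u, v ⟫ = ⟪ u, G v ⟫)
    (hGinv : ∀ u ∈ Wtot P, Δ (G u) = u)
    (hGmap : ∀ n, ∀ u ∈ Wlt P (n + 1), G u ∈ Wlt P (n + 2))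
    (C : ℝ) (hC : 0 < C)
    (hGbound : ∀ u ∈ Wtot P, ‖G u‖ ≤ C * ‖u‖)
    (χ : ℝ) (hχ : 0 < χ)
    (p s : ℕ → H)
    (hportho : ∀ n, ∀ w ∈ Wlt P n, ⟪ p n, w ⟫ = 0)
    (hsmonic : ∀ n, s n - P n ∈ Wlt P n)
    (hsortho : ∀ n, ∀ w ∈ Wlt P n, innerS Δ χ (s n) w = 0)
    (m : ℕ) (hpT : p (m + 2) ∈ Wtot P) (d : H)
    (hdw : ∀ w ∈ Wlt P (m + 3), innerS Δ χ d w = -⟪ p (m + 2), G w ⟫)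
    (k : ℕ) (hk1 : 1 ≤ k) (hk2 : k + 1 ≤ m + 3) :
    ‖(innerS Δ χ d (s k) / innerS Δ χ (s k) (s k)) • s k‖ ≤ χ⁻¹ * C ^ 3 * ‖p (m + 2)‖ := by
  obtain ⟨j, rfl⟩ : ∃ j, k = j + 1 := ⟨k - 1, by omega⟩
  have hskW : s (j + 1) ∈ Wlt P (j + 2) := by
    have h1 := Wlt_mono P (j + 1).le_succ (hsmonic (j + 1))
    have h2 : s (j + 1) = (s (j + 1) - P (j + 1)) + P (j + 1) := by abel
    rw [h2]; exact add_mem h1 (P_mem_Wlt P (by omega))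
  have hskT : s (j + 1) ∈ Wtot P := Wlt_le_Wtot P _ hskW
  have hΔsW : Δ (s (j + 1)) ∈ Wlt P (j + 1) := Delta_maps P Δ hΔ0 hΔsucc hskW
  have hΔsT : Δ (s (j + 1)) ∈ Wtot P := Wlt_le_Wtot P _ hΔsW
  have hΔsne : Δ (s (j + 1)) ≠ 0 := by
    intro h0
    have h1 : Δ (s (j + 1) - P (j + 1)) ∈ Wlt P j := Delta_maps P Δ hΔ0 hΔsucc (hsmonic (j + 1))
    have h2 : Δ (s (j + 1) - P (j + 1)) = -P j := by rw [map_sub, h0, hΔsucc]; abel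
    have h3 : P j ∈ Wlt P j := by rw [h2] at h1; simpa using neg_mem h1
    exact absurd h3 (by rw [Wlt]; exact hP.notMem_span_image (by simp))
  have ha : 0 < ‖Δ (s (j + 1))‖ := norm_pos_iff.2 hΔsne
  have hGΔT : G (Δ (s (j + 1))) ∈ Wtot P := Wlt_le_Wtot P _ (hGmap j _ hΔsW)
  obtain ⟨c, hc⟩ := ker_delta P hP Δ hΔ0 hΔsucc (sub_mem hskT hGΔT)
    (by rw [map_sub, hGinv _ hΔsT, sub_self])
  have hs_eq : s (j + 1) = G (Δ (s (j + 1))) + c • P 0 := by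
    rw [← hc]; abel
  have hGpT : G (p (m + 2)) ∈ Wtot P := G_mem_Wtot P G hGmap hpT
  -- the numerator identity
  have hnum : innerS Δ χ d (s (j + 1)) = -⟪ G (G (p (m + 2))), Δ (s (j + 1)) ⟫ := by
    rw [hdw _ (Wlt_mono P (by omega) hskW)]
    congr 1
    have step1 : ⟪ p (m + 2), G (s (j + 1)) ⟫
        = ⟪ p (m + 2), G (G (Δ (s (j + 1)))) ⟫ + c * ⟪ p (m + 2), G (P 0) ⟫ := by
      conv_lhs => rw [hs_eq]
      rw [map_add, map_smul, inner_add_right, real_inner_smul_right]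
    have step2 : ⟪ p (m + 2), G (P 0) ⟫ = 0 := by
      have hGP0 : G (P 0) ∈ Wlt P (m + 2) :=
        Wlt_mono P (by omega) (hGmap 0 (P 0) (P_mem_Wlt P Nat.one_pos))
      exact hportho (m + 2) _ hGP0
    have step3 : ⟪ p (m + 2), G (G (Δ (s (j + 1)))) ⟫ = ⟪ G (G (p (m + 2))), Δ (s (j + 1)) ⟫ := by
      rw [← hGsym _ hpT _ hGΔT, hGsym _ hGpT _ hΔsT]
    rw [step1, step2, step3]; ring
  -- numerator bound
  have hnb : |innerS Δ χ d (s (j + 1))| ≤ C ^ 2 * ‖p (m + 2)‖ * ‖Δ (s (j + 1))‖ := by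
    rw [hnum, abs_neg]
    have h1 : |⟪ G (G (p (m + 2))), Δ (s (j + 1)) ⟫| ≤ ‖G (G (p (m + 2)))‖ * ‖Δ (s (j + 1))‖ :=
      abs_real_inner_le_norm _ _
    have h2 : ‖G (G (p (m + 2)))‖ ≤ C * ‖G (p (m + 2))‖ := hGbound _ hGpT
    have h3 : ‖G (p (m + 2))‖ ≤ C * ‖p (m + 2)‖ := hGbound _ hpT
    have h4 : ‖G (G (p (m + 2)))‖ ≤ C * (C * ‖p (m + 2)‖) :=
      h2.trans (mul_le_mul_of_nonneg_left h3 hC.le)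
    have h5 : ‖G (G (p (m + 2)))‖ * ‖Δ (s (j + 1))‖
        ≤ (C * (C * ‖p (m + 2)‖)) * ‖Δ (s (j + 1))‖ :=
      mul_le_mul_of_nonneg_right h4 (norm_nonneg _)
    linarith
  -- ‖s k‖ ≤ C ‖Δ s k‖
  have hsP0 : ⟪ s (j + 1), P 0 ⟫ = 0 := by
    have h := hsortho (j + 1) (P 0) (P_mem_Wlt P (by omega))
    rw [innerS, hΔ0] at h
    simpa using h
  have hsnorm : ‖s (j + 1)‖ ≤ C * ‖Δ (s (j + 1))‖ := by
    have h1 : ⟪ s (j + 1), s (j + 1) ⟫ = ⟪ s (j + 1), G (Δ (s (j + 1))) ⟫ := by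
      nth_rewrite 2 [hs_eq]
      rw [inner_add_right, real_inner_smul_right, hsP0]; ring
    have h2 : ⟪ s (j + 1), G (Δ (s (j + 1))) ⟫ ≤ ‖s (j + 1)‖ * ‖G (Δ (s (j + 1)))‖ :=
      real_inner_le_norm _ _
    have h3 : ‖G (Δ (s (j + 1)))‖ ≤ C * ‖Δ (s (j + 1))‖ := hGbound _ hΔsT
    have h4 : ‖s (j + 1)‖ ^ 2 ≤ ‖s (j + 1)‖ * (C * ‖Δ (s (j + 1))‖) := by
      rw [← real_inner_self_eq_norm_sq, h1]
      nlinarith [norm_nonneg (s (j + 1))]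
    nlinarith [norm_nonneg (s (j + 1)), mul_pos hC ha]
  -- denominator
  have hQ : innerS Δ χ (s (j + 1)) (s (j + 1)) = ‖s (j + 1)‖ ^ 2 + χ * ‖Δ (s (j + 1))‖ ^ 2 :=
    innerS_self Δ χ _
  have hQpos : 0 < innerS Δ χ (s (j + 1)) (s (j + 1)) := by
    rw [hQ]
    nlinarith [sq_nonneg ‖s (j + 1)‖, mul_pos hχ (pow_pos ha 2)]
  -- final arithmetic
  rw [norm_smul, Real.norm_eq_abs, abs_div, abs_of_pos hQpos, div_mul_eq_mul_div,
    div_le_iff₀ hQpos]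
  have hstep1 : |innerS Δ χ d (s (j + 1))| * ‖s (j + 1)‖
      ≤ C ^ 3 * ‖p (m + 2)‖ * ‖Δ (s (j + 1))‖ ^ 2 := by
    have := mul_le_mul hnb hsnorm (norm_nonneg _) (by positivity)
    linarith [this]
  have hQge : χ * ‖Δ (s (j + 1))‖ ^ 2 ≤ innerS Δ χ (s (j + 1)) (s (j + 1)) := by
    rw [hQ]; nlinarith [sq_nonneg ‖s (j + 1)‖]
  have hkey : C ^ 3 * ‖p (m + 2)‖ * ‖Δ (s (j + 1))‖ ^ 2
      ≤ χ⁻¹ * C ^ 3 * ‖p (m + 2)‖ * innerS Δ χ (s (j + 1)) (s (j + 1)) := by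
    have h1 : χ⁻¹ * C ^ 3 * ‖p (m + 2)‖ * (χ * ‖Δ (s (j + 1))‖ ^ 2)
        ≤ χ⁻¹ * C ^ 3 * ‖p (m + 2)‖ * innerS Δ χ (s (j + 1)) (s (j + 1)) :=
      mul_le_mul_of_nonneg_left hQge (by positivity)
    have h2 : χ⁻¹ * C ^ 3 * ‖p (m + 2)‖ * (χ * ‖Δ (s (j + 1))‖ ^ 2)
        = C ^ 3 * ‖p (m + 2)‖ * ‖Δ (s (j + 1))‖ ^ 2 := by
      field_simp
    linarith
  linarith

/-- For `n ≥ 3`: `‖s_n − f_n‖₂ ≤ 2χ⁻¹C⁵‖p_{n−3}‖₂` (where `f_n = Gp_{n−1}`). -/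
theorem statement11
    (P : ℕ → H) (hP : LinearIndependent ℝ P)
    (Δ G : H →ₗ[ℝ] H)
    (hΔ0 : Δ (P 0) = 0) (hΔsucc : ∀ n, Δ (P (n + 1)) = P n)
    (hGsym : ∀ u ∈ Wtot P, ∀ v ∈ Wtot P, ⟪ G u, v ⟫ = ⟪ u, G v ⟫)
    (hGinv : ∀ u ∈ Wtot P, Δ (G u) = u)
    (hGmap : ∀ n, ∀ u ∈ Wlt P (n + 1), G u ∈ Wlt P (n + 2))
    (C : ℝ) (hC : 0 < C)
    (hGbound : ∀ u ∈ Wtot P, ‖G u‖ ≤ C * ‖u‖)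
    (χ : ℝ) (hχ : 0 < χ)
    (p : ℕ → H)
    (hpmonic : ∀ n, p n - P n ∈ Wlt P n)
    (hportho : ∀ n, ∀ w ∈ Wlt P n, ⟪ p n, w ⟫ = 0)
    (s : ℕ → H)
    (hsmonic : ∀ n, s n - P n ∈ Wlt P n)
    (hsortho : ∀ n, ∀ w ∈ Wlt P n, innerS Δ χ (s n) w = 0)
    : ∀ n, 3 ≤ n →
      ‖s n - G (p (n - 1))‖ ≤ 2 * χ⁻¹ * C ^ 5 * ‖p (n - 3)‖ := by
  intro n hn
  obtain ⟨m, rfl⟩ : ∃ m, n = m + 3 := ⟨n - 3, by omega⟩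
  have e1 : m + 3 - 1 = m + 2 := by omega
  have e2 : m + 3 - 3 = m := by omega
  rw [e1, e2]
  -- basic memberships
  have hpW : ∀ j, p j ∈ Wlt P (j + 1) := by
    intro j
    have h2 : p j = (p j - P j) + P j := by abel
    rw [h2]; exact add_mem (Wlt_mono P j.le_succ (hpmonic j)) (P_mem_Wlt P j.lt_succ_self)
  have hsW : ∀ j, s j ∈ Wlt P (j + 1) := by
    intro j
    have h2 : s j = (s j - P j) + P j := by abel
    rw [h2]; exact add_mem (Wlt_mono P j.le_succ (hsmonic j)) (P_mem_Wlt P j.lt_succ_self)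
  have hpT : ∀ j, p j ∈ Wtot P := fun j => Wlt_le_Wtot P _ (hpW j)
  set d := s (m + 3) - G (p (m + 2)) with hd_def
  -- f = G p_{m+2} is monic of degree m+3
  have hfm := G_monic P hP Δ G hΔ0 hΔsucc hGinv hGmap (hpW (m + 2)) (hpmonic (m + 2))
  have hdW : d ∈ Wlt P (m + 3) := by
    have h2 : d = (s (m + 3) - P (m + 3)) - (G (p (m + 2)) - P (m + 3)) := by
      rw [hd_def]; abel
    rw [h2]; exact sub_mem (hsmonic _) hfm.2
  -- the key identity
  have hdw : ∀ w ∈ Wlt P (m + 3), innerS Δ χ d w = -⟪ p (m + 2), G w ⟫ := by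
    intro w hw
    have hwT : w ∈ Wtot P := Wlt_le_Wtot P _ hw
    have h0 := hsortho (m + 3) w hw
    have hΔf : Δ (G (p (m + 2))) = p (m + 2) := hGinv _ (hpT (m + 2))
    have hΔw : Δ w ∈ Wlt P (m + 2) := Delta_maps P Δ hΔ0 hΔsucc hw
    have h2 : ⟪ p (m + 2), Δ w ⟫ = 0 := hportho (m + 2) _ hΔw
    have h3 : ⟪ G (p (m + 2)), w ⟫ = ⟪ p (m + 2), G w ⟫ := hGsym _ (hpT (m + 2)) w hwT
    have h4 : innerS Δ χ (G (p (m + 2))) w = ⟪ p (m + 2), G w ⟫ := by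
      rw [innerS, hΔf, h2, h3]; ring
    rw [hd_def, innerS_sub_left, h0, h4]; ring
  -- orthogonality of the Sobolev polynomials
  have hs_orth : ∀ j k : ℕ, j < k → innerS Δ χ (s k) (s j) = 0 := fun j k hjk =>
    hsortho k (s j) (Wlt_mono P (by omega) (hsW j))
  -- positivity of Sobolev norms
  have hsne : ∀ k : ℕ, s k ≠ 0 := by
    intro k h0
    have h1 := hsmonic k
    rw [h0] at h1
    have h2 : P k ∈ Wlt P k := by simpa using neg_mem h1
    exact absurd h2 (by rw [Wlt]; exact hP.notMem_span_image (by simp))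
  have hQpos : ∀ k, 0 < innerS Δ χ (s k) (s k) := by
    intro k
    rw [innerS_self]
    have h1 : 0 < ‖s k‖ := norm_pos_iff.2 (hsne k)
    nlinarith [mul_nonneg hχ.le (sq_nonneg ‖Δ (s k)‖)]
  set c2 := innerS Δ χ d (s (m + 2)) / innerS Δ χ (s (m + 2)) (s (m + 2)) with hc2_def
  set c1 := innerS Δ χ d (s (m + 1)) / innerS Δ χ (s (m + 1)) (s (m + 1)) with hc1_def
  set e := d - c2 • s (m + 2) - c1 • s (m + 1) with he_def
  have heorth : ∀ j, j < m + 3 → innerS Δ χ e (s j) = 0 := by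
    intro j hj
    rw [he_def, innerS_sub_left, innerS_sub_left, innerS_smul_left, innerS_smul_left]
    obtain h | rfl | rfl := (show j ≤ m ∨ j = m + 1 ∨ j = m + 2 by omega)
    · have hds : innerS Δ χ d (s j) = 0 := by
        rw [hdw _ (Wlt_mono P (by omega) (hsW j))]
        have hGs : G (s j) ∈ Wlt P (m + 2) :=
          Wlt_mono P (by omega) (hGmap j _ (hsW j))
        rw [hportho (m + 2) _ hGs]; ring
      rw [hds, hs_orth j (m + 2) (by omega), hs_orth j (m + 1) (by omega)]; ring
    · rw [hc1_def, hs_orth (m + 1) (m + 2) (by omega),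
        div_mul_cancel₀ _ (hQpos (m + 1)).ne']
      ring
    · rw [hc2_def, innerS_comm Δ χ (s (m + 1)) (s (m + 2)),
        hs_orth (m + 1) (m + 2) (by omega), div_mul_cancel₀ _ (hQpos (m + 2)).ne']
      ring
  have heS : e ∈ Submodule.span ℝ (s '' Set.Iio (m + 3)) := by
    rw [he_def]
    refine sub_mem (sub_mem ?_ ?_) ?_
    · exact Wlt_le_span_s P s hsmonic (m + 3) hdW
    · exact Submodule.smul_mem _ _ (Submodule.subset_span ⟨m + 2, Set.mem_Iio.2 (by omega), rfl⟩)
    · exact Submodule.smul_mem _ _ (Submodule.subset_span ⟨m + 1, Set.mem_Iio.2 (by omega), rfl⟩)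
  have hee : innerS Δ χ e e = 0 := by
    have hall : ∀ x ∈ Submodule.span ℝ (s '' Set.Iio (m + 3)), innerS Δ χ e x = 0 := by
      intro x hx
      induction hx using Submodule.span_induction with
      | mem x hx =>
        obtain ⟨j, hj, rfl⟩ := hx
        exact heorth j (Set.mem_Iio.1 hj)
      | zero => simp [innerS]
      | add x y hx hy ihx ihy => rw [innerS_add_right, ihx, ihy]; ring
      | smul a x hx ihx => rw [innerS_smul_right, ihx]; ring
    exact hall e heS
  have he0 : e = 0 := by
    rw [innerS_self] at hee
    have h2 : ‖e‖ = 0 := by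
      nlinarith [sq_nonneg ‖e‖, norm_nonneg e, mul_nonneg hχ.le (sq_nonneg ‖Δ e‖)]
    exact norm_eq_zero.1 h2
  have hdeq : d = c2 • s (m + 2) + c1 • s (m + 1) := by
    have h1 : d - c2 • s (m + 2) - c1 • s (m + 1) = 0 := by rw [← he_def]; exact he0
    have h2 : d = (d - c2 • s (m + 2) - c1 • s (m + 1)) + c2 • s (m + 2) + c1 • s (m + 1) := by
      abel
    rw [h2, h1]; abel
  -- the two coefficient bounds
  have hb2 : ‖c2 • s (m + 2)‖ ≤ χ⁻¹ * C ^ 3 * ‖p (m + 2)‖ := by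
    rw [hc2_def]
    exact key_bound P hP Δ G hΔ0 hΔsucc hGsym hGinv hGmap C hC hGbound χ hχ p s
      hportho hsmonic hsortho m (hpT (m + 2)) d hdw (m + 2) (by omega) (by omega)
  have hb1 : ‖c1 • s (m + 1)‖ ≤ χ⁻¹ * C ^ 3 * ‖p (m + 2)‖ := by
    rw [hc1_def]
    exact key_bound P hP Δ G hΔ0 hΔsucc hGsym hGinv hGmap C hC hGbound χ hχ p s
      hportho hsmonic hsortho m (hpT (m + 2)) d hdw (m + 1) (by omega) (by omega)
  -- comparison of Legendre norms
  have hpb : ‖p (m + 2)‖ ≤ C ^ 2 * ‖p m‖ := by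
    have h1 := G_monic P hP Δ G hΔ0 hΔsucc hGinv hGmap (hpW m) (hpmonic m)
    have h2 := G_monic P hP Δ G hΔ0 hΔsucc hGinv hGmap h1.1 h1.2
    have h3 : G (G (p m)) - p (m + 2) ∈ Wlt P (m + 2) := by
      have h4 : G (G (p m)) - p (m + 2)
          = (G (G (p m)) - P (m + 2)) - (p (m + 2) - P (m + 2)) := by abel
      rw [h4]; exact sub_mem h2.2 (hpmonic (m + 2))
    have h4 : ‖p (m + 2)‖ ≤ ‖G (G (p m))‖ := legendre_min P p hportho h3
    have h5 : ‖G (G (p m))‖ ≤ C * ‖G (p m)‖ := hGbound _ (Wlt_le_Wtot P _ h1.1)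
    have h6 : ‖G (p m)‖ ≤ C * ‖p m‖ := hGbound _ (hpT m)
    nlinarith [norm_nonneg (G (p m)), norm_nonneg (p m)]
  calc ‖d‖ = ‖c2 • s (m + 2) + c1 • s (m + 1)‖ := by rw [hdeq]
    _ ≤ ‖c2 • s (m + 2)‖ + ‖c1 • s (m + 1)‖ := norm_add_le _ _
    _ ≤ χ⁻¹ * C ^ 3 * ‖p (m + 2)‖ + χ⁻¹ * C ^ 3 * ‖p (m + 2)‖ := add_le_add hb2 hb1
    _ = 2 * (χ⁻¹ * C ^ 3) * ‖p (m + 2)‖ := by ring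
    _ ≤ 2 * (χ⁻¹ * C ^ 3) * (C ^ 2 * ‖p m‖) :=
        mul_le_mul_of_nonneg_left hpb (by positivity)
    _ = 2 * χ⁻¹ * C ^ 5 * ‖p m‖ := by ring
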